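/- Let (B₁,...,B_d) be a splitting of the Jacobi iteration matrix B_J. Then λ = 1 is an eigenvalue of the iteration matrix 𝓑_{(d)} if and only if λ = 1 is an eigenvalue of B_J. -/
import Mathlib

open Matrix

/-- A splitting of `B`: nonzero parts summing to `B` with pairwise vanishing
Hadamard products. -/
def IsSplitting {n d : ℕ} (B : Matrix (Fin n) (Fin n) ℝ)
    (Bs : Fin d → Matrix (Fin n) (Fin n) ℝ) : Prop :=
  (∀ p, Bs p ≠ 0) ∧ (∑ p, Bs p = B) ∧
    ∀ p q, p ≠ q → Matrix.hadamard (Bs p) (Bs q) = 0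

/-- Strictly block-lower-triangular part `𝓛` of the splitting scheme. -/
def blockL {n d : ℕ} (Bs : Fin d → Matrix (Fin n) (Fin n) ℝ) :
    Matrix (Fin d × Fin n) (Fin d × Fin n) ℝ :=
  Matrix.of fun pi qj => if qj.1 < pi.1 then Bs qj.1 pi.2 qj.2 else 0

/-- Block-upper-triangular part `𝓤` of the splitting scheme. -/
def blockU {n d : ℕ} (Bs : Fin d → Matrix (Fin n) (Fin n) ℝ) :
    Matrix (Fin d × Fin n) (Fin d × Fin n) ℝ :=
  Matrix.of fun pi qj => if pi.1 ≤ qj.1 then Bs qj.1 pi.2 qj.2 else 0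

/-- The iteration matrix `𝓑 = (𝓘 - 𝓛)⁻¹ 𝓤` of a splitting. -/
noncomputable def iterMat {n d : ℕ} (Bs : Fin d → Matrix (Fin n) (Fin n) ℝ) :
    Matrix (Fin d × Fin n) (Fin d × Fin n) ℝ :=
  (1 - blockL Bs)⁻¹ * blockU Bs

/-- Complexification of the iteration matrix. -/
noncomputable def iterMatC {n d : ℕ} (Bs : Fin d → Matrix (Fin n) (Fin n) ℝ) :
    Matrix (Fin d × Fin n) (Fin d × Fin n) ℂ :=
  (iterMat Bs).map Complex.ofReal

/-- Spectral radius of a real matrix, via its complexification. -/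
noncomputable def specRad {m : Type*} [Fintype m] [DecidableEq m]
    (M : Matrix m m ℝ) : ENNReal :=
  spectralRadius ℂ (M.map Complex.ofReal)

section Aux

variable {n d : ℕ} (Bs : Fin d → Matrix (Fin n) (Fin n) ℝ)

lemma blockL_pow_entry :
    ∀ (k : ℕ) (pi qj : Fin d × Fin n), ((blockL Bs) ^ k) pi qj ≠ 0 →
      (qj.1 : ℕ) + k ≤ (pi.1 : ℕ) := by
  intro k
  induction k with
  | zero =>
    intro pi qj h
    rw [pow_zero] at h
    by_cases hpq : pi = qj
    · subst hpq; omega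
    · exact absurd (Matrix.one_apply_ne hpq) h
  | succ k ih =>
    intro pi qj h
    rw [pow_succ'] at h
    obtain ⟨r, -, hr⟩ := Finset.exists_ne_zero_of_sum_ne_zero h
    have h1 : blockL Bs pi r ≠ 0 := fun h0 => hr (by simp [h0])
    have h2 : ((blockL Bs) ^ k) r qj ≠ 0 := fun h0 => hr (by simp [h0])
    have hlt : (r.1 : ℕ) < (pi.1 : ℕ) := by
      by_contra hge
      refine h1 ?_
      simp only [blockL, Matrix.of_apply, Fin.lt_def]
      exact if_neg (by omega)
    have := ih r qj h2
    omega

lemma blockL_nilpotent : IsNilpotent (blockL Bs) := by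
  refine ⟨d, ?_⟩
  ext pi qj
  by_contra h
  have := blockL_pow_entry Bs d pi qj h
  have := pi.1.isLt
  omega

lemma not_isUnit_iff_exists_mulVec {m : Type*} [Fintype m] [DecidableEq m]
    (M : Matrix m m ℝ) : ¬ IsUnit M ↔ ∃ v ≠ 0, M *ᵥ v = 0 := by
  rw [Matrix.isUnit_iff_isUnit_det, isUnit_iff_ne_zero, not_not,
    ← Matrix.exists_mulVec_eq_zero_iff]

lemma blockL_add_blockU (pi qj : Fin d × Fin n) :
    (blockL Bs + blockU Bs) pi qj = Bs qj.1 pi.2 qj.2 := by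
  simp only [Matrix.add_apply, blockL, blockU, Matrix.of_apply]
  rcases lt_or_ge qj.1 pi.1 with h | h
  · rw [if_pos h, if_neg (not_le.mpr h), add_zero]
  · rw [if_neg (not_lt.mpr h), if_pos h, zero_add]

end Aux

/-- `λ = 1` is an eigenvalue of the iteration matrix of a splitting of `B_J`
if and only if `λ = 1` is an eigenvalue of `B_J`. -/
theorem one_eigenvalue_iff (n d : ℕ) (BJ : Matrix (Fin n) (Fin n) ℝ)
    (Bs : Fin d → Matrix (Fin n) (Fin n) ℝ)
    (hsplit : IsSplitting BJ Bs) :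
    (1 : ℝ) ∈ spectrum ℝ (iterMat Bs) ↔ (1 : ℝ) ∈ spectrum ℝ BJ := by
  obtain ⟨-, hsum, -⟩ := hsplit
  have hBJ : ∀ i j, BJ i j = ∑ q, Bs q i j := by
    intro i j
    rw [← hsum]
    simp [Matrix.sum_apply]
  rw [spectrum.mem_iff, spectrum.mem_iff, _root_.map_one, _root_.map_one]
  have hUnit : IsUnit (1 - blockL Bs) := (blockL_nilpotent Bs).isUnit_one_sub
  have hdet : IsUnit (1 - blockL Bs).det := (Matrix.isUnit_iff_isUnit_det _).mp hUnit
  have hinvUnit : IsUnit (1 - blockL Bs)⁻¹ :=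
    Matrix.isUnit_nonsing_inv_iff.mpr hUnit
  have hfac : 1 - iterMat Bs =
      (1 - blockL Bs)⁻¹ * (1 - (blockL Bs + blockU Bs)) := by
    rw [iterMat, show (1 : Matrix (Fin d × Fin n) (Fin d × Fin n) ℝ) -
        (blockL Bs + blockU Bs) = (1 - blockL Bs) - blockU Bs by abel,
      Matrix.mul_sub, Matrix.nonsing_inv_mul _ hdet]
  rw [hfac, show ((1 - blockL Bs)⁻¹ : Matrix _ _ ℝ) = ↑hinvUnit.unit from
    hinvUnit.unit_spec.symm, Units.isUnit_units_mul,
    not_isUnit_iff_exists_mulVec, not_isUnit_iff_exists_mulVec]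
  have hsub : ∀ {m : Type} [Fintype m] [DecidableEq m] (M : Matrix m m ℝ) (v : m → ℝ),
      (1 - M) *ᵥ v = 0 ↔ M *ᵥ v = v := by
    intro m _ _ M v
    rw [Matrix.sub_mulVec, Matrix.one_mulVec, sub_eq_zero, eq_comm]
  constructor
  · rintro ⟨v, hv0, hv⟩
    rw [hsub] at hv
    set s : Fin n → ℝ := fun i => ∑ q, ∑ j, Bs q i j * v (q, j) with hs
    have hveq : ∀ p i, v (p, i) = s i := by
      intro p i
      have := congrFun hv (p, i)
      rw [Matrix.mulVec, dotProduct, Fintype.sum_prod_type] at this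
      simp only [blockL_add_blockU] at this
      exact this.symm
    refine ⟨s, ?_, ?_⟩
    · intro h0
      apply hv0
      funext ⟨p, i⟩
      rw [hveq p i, h0]
      rfl
    · rw [hsub]
      funext i
      rw [Matrix.mulVec, dotProduct]
      simp only [hBJ, Finset.sum_mul]
      rw [Finset.sum_comm]
      calc (∑ q, ∑ j, Bs q i j * s j) = ∑ q, ∑ j, Bs q i j * v (q, j) := by
            refine Finset.sum_congr rfl fun q _ => Finset.sum_congr rfl fun j _ => ?_
            rw [hveq q j]
          _ = s i := rfl
  · rintro ⟨y, hy0, hy⟩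
    rw [hsub] at hy
    rcases isEmpty_or_nonempty (Fin d) with hd | hd
    · exfalso
      apply hy0
      have : BJ = 0 := by rw [← hsum]; simp
      rw [this, Matrix.zero_mulVec] at hy
      exact hy.symm
    · refine ⟨fun pi => y pi.2, ?_, ?_⟩
      · intro h0
        apply hy0
        funext i
        exact congrFun h0 (Classical.arbitrary _, i)
      · rw [hsub]
        funext ⟨p, i⟩
        rw [Matrix.mulVec, dotProduct, Fintype.sum_prod_type]
        simp only [blockL_add_blockU]
        have := congrFun hy i
        rw [Matrix.mulVec, dotProduct] at this
        simp only [hBJ, Finset.sum_mul] at this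
        rw [← this, Finset.sum_comm]
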